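/- Let f : S₊ⁿ → ℝ be convex and M-smooth over PSD matrices, let X* ⪰ 0 minimize f over the PSD cone, and let 0 be a feasible point. Then ‖P₊(−∇f(0))‖_F ≤ M·‖X*‖_F, where P₊ denotes projection onto the PSD cone. -/

import Mathlib

open Matrix

noncomputable def vnorm {m : Type*} [Fintype m] (v : m → ℝ) : ℝ :=
  Real.sqrt (∑ i, v i ^ 2)

noncomputable def frob {m n : Type*} [Fintype m] [Fintype n] (A : Matrix m n ℝ) : ℝ :=
  Real.sqrt (∑ i, ∑ j, A i j ^ 2)

/-- The spectral norm (largest singular value) of a real matrix. -/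
noncomputable def specNorm {m n : Type*} [Fintype m] [Fintype n] (A : Matrix m n ℝ) : ℝ :=
  sSup {c | ∃ x : n → ℝ, vnorm x = 1 ∧ c = vnorm (A.mulVec x)}

/-- The smallest singular value of a real matrix. -/
noncomputable def sigMin {m n : Type*} [Fintype m] [Fintype n] (A : Matrix m n ℝ) : ℝ :=
  sInf {c | ∃ x : n → ℝ, vnorm x = 1 ∧ c = vnorm (A.mulVec x)}

/-- `Dist U V`: the infimum of `‖U - V R‖_F` over orthogonal `R`. -/
noncomputable def FDist {n r : Type*} [Fintype n] [Fintype r] [DecidableEq r]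
    (U V : Matrix n r ℝ) : ℝ :=
  sInf {c | ∃ R : Matrix r r ℝ, Rᵀ * R = 1 ∧ c = frob (U - V * R)}

/-- The `i`-th largest singular value of a real matrix. -/
noncomputable def singVal {n m : ℕ} (A : Matrix (Fin n) (Fin m) ℝ) (i : Fin m) : ℝ :=
  Real.sqrt ((Matrix.conjTranspose_eq_transpose_of_trivial A ▸ Matrix.isHermitian_conjTranspose_mul_self A).eigenvalues
    ((Tuple.sort (Matrix.conjTranspose_eq_transpose_of_trivial A ▸ Matrix.isHermitian_conjTranspose_mul_self A).eigenvalues) i.rev))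

lemma frob_nonneg {m n : Type*} [Fintype m] [Fintype n] (A : Matrix m n ℝ) : 0 ≤ frob A :=
  Real.sqrt_nonneg _

lemma frob_sq {m n : Type*} [Fintype m] [Fintype n] (A : Matrix m n ℝ) :
    frob A ^ 2 = ∑ i, ∑ j, A i j ^ 2 :=
  Real.sq_sqrt (Finset.sum_nonneg fun _ _ => Finset.sum_nonneg fun _ _ => sq_nonneg _)

lemma frob_cs {m n : Type*} [Fintype m] [Fintype n] (A B : Matrix m n ℝ) :
    (∑ i, ∑ j, A i j * B i j) ≤ frob A * frob B := by
  have h := Finset.sum_mul_sq_le_sq_mul_sq Finset.univ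
      (fun p : m × n => A p.1 p.2) (fun p : m × n => B p.1 p.2)
  have hA : (∑ p : m × n, A p.1 p.2 ^ 2) = ∑ i, ∑ j, A i j ^ 2 := Fintype.sum_prod_type _
  have hB : (∑ p : m × n, B p.1 p.2 ^ 2) = ∑ i, ∑ j, B i j ^ 2 := Fintype.sum_prod_type _
  have hAB : (∑ p : m × n, A p.1 p.2 * B p.1 p.2) = ∑ i, ∑ j, A i j * B i j :=
    Fintype.sum_prod_type _
  rw [hA, hB, hAB] at h
  have hnn : 0 ≤ frob A * frob B := mul_nonneg (frob_nonneg A) (frob_nonneg B)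
  nlinarith [frob_sq A, frob_sq B, sq_nonneg ((∑ i, ∑ j, A i j * B i j) - frob A * frob B)]

lemma psd_smul {n : Type*} [Fintype n] {A : Matrix n n ℝ} (hA : A.PosSemidef) {c : ℝ}
    (hc : 0 ≤ c) : (c • A).PosSemidef := by
  refine ⟨?_, fun x => ?_⟩
  · simp [Matrix.IsHermitian, Matrix.conjTranspose_smul]
    rw [show Aᵀ = A from hA.1.eq]
  · have := hA.2 x
    convert smul_nonneg hc this using 1
    simp only [smul_eq_mul, Finsupp.sum, Finset.mul_sum, Matrix.smul_apply, star_trivial]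
    exact Finset.sum_congr rfl fun i _ => Finset.sum_congr rfl fun j _ => by ring

lemma psd_add {n : Type*} [Fintype n] {A B : Matrix n n ℝ} (hA : A.PosSemidef)
    (hB : B.PosSemidef) : (A + B).PosSemidef := by
  refine ⟨?_, fun x => ?_⟩
  · simp [Matrix.IsHermitian, Matrix.conjTranspose_add]
    rw [show Aᵀ = A from hA.1.eq, show Bᵀ = B from hB.1.eq]
  · have := hA.2 x; have := hB.2 x
    simpa [mul_add, add_mul] using add_nonneg (hA.2 x) (hB.2 x)


/-- For convex `M`-smooth `f` over the PSD cone with PSD minimizer `X*`,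
the PSD-cone projection `Y = P₊(-∇f(0))` satisfies `‖Y‖_F ≤ M ‖X*‖_F`. -/
theorem stmt5 {n : ℕ} (M : ℝ)
    (f : Matrix (Fin n) (Fin n) ℝ → ℝ)
    (g : Matrix (Fin n) (Fin n) ℝ → Matrix (Fin n) (Fin n) ℝ)
    (hconv : ConvexOn ℝ {X : Matrix (Fin n) (Fin n) ℝ | X.PosSemidef} f)
    (hgrad : ∀ X H : Matrix (Fin n) (Fin n) ℝ,
      HasDerivAt (fun t : ℝ => f (X + t • H)) (((g X)ᵀ * H).trace) 0)
    (hsmooth : ∀ X Y : Matrix (Fin n) (Fin n) ℝ, X.PosSemidef → Y.PosSemidef →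
      frob (g X - g Y) ≤ M * frob (X - Y))
    (Xstar : Matrix (Fin n) (Fin n) ℝ) (hXstar : Xstar.PosSemidef)
    (hopt : ∀ Z : Matrix (Fin n) (Fin n) ℝ, Z.PosSemidef → f Xstar ≤ f Z)
    (Y : Matrix (Fin n) (Fin n) ℝ) (hY : Y.PosSemidef)
    (hproj : ∀ Z : Matrix (Fin n) (Fin n) ℝ, Z.PosSemidef →
      frob (-(g 0) - Y) ≤ frob (-(g 0) - Z)) :
    frob Y ≤ M * frob Xstar := by
  -- basic nonnegativity of the RHS
  have hMX : 0 ≤ M * frob Xstar := by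
    have h := hsmooth Xstar 0 hXstar Matrix.PosSemidef.zero
    rw [sub_zero] at h
    exact le_trans (frob_nonneg _) h
  set G : Matrix (Fin n) (Fin n) ℝ := g 0 with hG
  set q : ℝ := ∑ i, ∑ j, Y i j ^ 2 with hq
  have hq0 : 0 ≤ q := Finset.sum_nonneg fun _ _ => Finset.sum_nonneg fun _ _ => sq_nonneg _
  by_cases hqz : q = 0
  · have : frob Y = 0 := by rw [frob, ← hq, hqz, Real.sqrt_zero]
    rw [this]; exact hMX
  have hqpos : 0 < q := lt_of_le_of_ne hq0 (Ne.symm hqz)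
  set c : ℝ := ∑ i, ∑ j, (-G - Y) i j * Y i j with hc
  -- Step A: variational inequality c ≥ 0
  have stepA : 0 ≤ c := by
    have key : ∀ t : ℝ, 0 ≤ t → t ≤ 1 → 0 ≤ 2 * t * c + t ^ 2 * q := by
      intro t ht0 ht1
      have hpsd : ((1 - t) • Y).PosSemidef := psd_smul hY (by linarith)
      have h := hproj _ hpsd
      have h2 : frob (-G - Y) ^ 2 ≤ frob (-G - (1 - t) • Y) ^ 2 :=
        pow_le_pow_left₀ (frob_nonneg _) h 2
      rw [frob_sq, frob_sq] at h2
      have hent : ∀ i j, (-G - (1 - t) • Y) i j ^ 2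
          = (-G - Y) i j ^ 2 + 2 * t * ((-G - Y) i j * Y i j) + t ^ 2 * Y i j ^ 2 := by
        intro i j
        simp only [Matrix.sub_apply, Matrix.neg_apply, Matrix.smul_apply, smul_eq_mul]
        ring
      have hsum : (∑ i, ∑ j, (-G - (1 - t) • Y) i j ^ 2)
          = (∑ i, ∑ j, (-G - Y) i j ^ 2) + 2 * t * c + t ^ 2 * q := by
        rw [hc, hq]
        simp_rw [hent, Finset.sum_add_distrib, ← Finset.mul_sum]
      rw [hsum] at h2
      linarith
    by_contra hcneg
    push_neg at hcneg
    set t : ℝ := min 1 (-c / q) with htdef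
    have ht0 : 0 < t := lt_min one_pos (div_pos (by linarith) hqpos)
    have ht1 : t ≤ 1 := min_le_left _ _
    have htq : t * q ≤ -c := by
      have := min_le_right 1 (-c / q)
      calc t * q ≤ (-c / q) * q := by nlinarith
        _ = -c := by field_simp
    have h := key t ht0.le ht1
    nlinarith
  -- Step B: first-order optimality at Xstar in direction Y
  set d : ℝ := ∑ i, ∑ j, g Xstar i j * Y i j with hd
  have stepB : 0 ≤ d := by
    have hder := hgrad Xstar Y
    have htr : ((g Xstar)ᵀ * Y).trace = d := by
      rw [Matrix.trace]
      simp only [Matrix.diag_apply, Matrix.mul_apply, Matrix.transpose_apply]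
      rw [hd, Finset.sum_comm]
    rw [htr] at hder
    have hslope := hasDerivAt_iff_tendsto_slope.mp hder
    have hmono : Filter.Tendsto (slope (fun t : ℝ => f (Xstar + t • Y)) 0) (nhdsWithin 0 (Set.Ioi 0))
        (nhds d) :=
      hslope.mono_left (nhdsWithin_mono _ (fun x hx => ne_of_gt hx))
    refine ge_of_tendsto hmono ?_
    filter_upwards [self_mem_nhdsWithin] with t ht
    have htpos : (0 : ℝ) < t := ht
    have hpsd : (Xstar + t • Y).PosSemidef := psd_add hXstar (psd_smul hY htpos.le)
    have hge : f Xstar ≤ f (Xstar + t • Y) := hopt _ hpsd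
    rw [slope_def_field]
    have h0 : f (Xstar + (0 : ℝ) • Y) = f Xstar := by simp
    simp only [h0]
    apply div_nonneg (by linarith) (by linarith)
  -- Step C: combine
  have hcexp : c = (∑ i, ∑ j, (-G) i j * Y i j) - q := by
    rw [hc, hq]
    simp_rw [Matrix.sub_apply, sub_mul, Finset.sum_sub_distrib, sq]
  have hkey : q ≤ ∑ i, ∑ j, (g Xstar - G) i j * Y i j := by
    have : (∑ i, ∑ j, (g Xstar - G) i j * Y i j)
        = d + ∑ i, ∑ j, (-G) i j * Y i j := by
      rw [hd, hG]
      rw [← Finset.sum_add_distrib]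
      refine Finset.sum_congr rfl fun i _ => ?_
      rw [← Finset.sum_add_distrib]
      refine Finset.sum_congr rfl fun j _ => ?_
      simp only [Matrix.sub_apply, Matrix.neg_apply]
      ring
    rw [this]
    have := hcexp
    linarith
  have hCS : (∑ i, ∑ j, (g Xstar - G) i j * Y i j) ≤ frob (g Xstar - G) * frob Y :=
    frob_cs _ _
  have hsm : frob (g Xstar - G) ≤ M * frob Xstar := by
    have h := hsmooth Xstar 0 hXstar Matrix.PosSemidef.zero
    rwa [sub_zero] at h
  have hfY : frob Y ^ 2 = q := by rw [frob_sq, hq]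
  have hfYpos : 0 < frob Y := by
    rw [frob, ← hq]; exact Real.sqrt_pos.mpr hqpos
  have final : frob Y ^ 2 ≤ (M * frob Xstar) * frob Y := by
    calc frob Y ^ 2 = q := hfY
      _ ≤ ∑ i, ∑ j, (g Xstar - G) i j * Y i j := hkey
      _ ≤ frob (g Xstar - G) * frob Y := hCS
      _ ≤ (M * frob Xstar) * frob Y := by
          exact mul_le_mul_of_nonneg_right hsm hfYpos.le
  nlinarith
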